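/- (CUSUM of a single-change signal.) Let s < θ < e be integers with 0 ≤ s and e ≤ n, let μ, d be reals, and let f_t = μ + d · 𝟙{t > θ} for t ∈ {s+1, …, e}. Then: (i) 𝒳_{s,θ,e}(f) = −d √((θ−s)(e−θ)/(e−s)); (ii) |𝒳_{s,c,e}(f)| ≤ |𝒳_{s,θ,e}(f)| for every integer s < c < e; (iii) |d| √( min(θ−s, e−θ)/2 ) ≤ |𝒳_{s,θ,e}(f)| ≤ |d| √( min(θ−s, e−θ) ); (iv) for every integer c with s < c ≤ θ, 𝒳_{s,θ,e}(f)² − 𝒳_{s,c,e}(f)² = d² (θ−c)(e−θ)/(e−c), and for every integer c with θ ≤ c < e, 𝒳_{s,θ,e}(f)² − 𝒳_{s,c,e}(f)² = d² (c−θ)(θ−s)/(c−s). -/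

import Mathlib

open Finset

/-- Mean of `x` over the interval `(s, e]`. -/
noncomputable def segMean (x : ℕ → ℝ) (s e : ℕ) : ℝ :=
  (∑ t ∈ Finset.Ioc s e, x t) / ((e : ℝ) - (s : ℝ))

/-- CUSUM statistic of `x` at split point `b` on the interval `(s, e]`. -/
noncomputable def cusum (x : ℕ → ℝ) (s b e : ℕ) : ℝ :=
  Real.sqrt (((b : ℝ) - s) * ((e : ℝ) - b) / ((e : ℝ) - s)) *
    (segMean x s b - segMean x b e)

/-- Largest element of `A ∪ {0}` that is `< t`. -/
def lbd (A : Finset ℕ) (t : ℕ) : ℕ :=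
  ((insert 0 A).filter (fun a => a < t)).max.unbotD 0

/-- Smallest element of `A ∪ {n}` that is `≥ t`. -/
def ubd (A : Finset ℕ) (n t : ℕ) : ℕ :=
  (((insert n A).filter (fun a => t ≤ a)).min).untopD n

/-- Residual sum of squares of `x_1, …, x_n` with respect to the segmentation
of `{1, …, n}` induced by the set of change point candidates `A`:
each `t` lies in the segment `(lbd A t, ubd A n t]`. -/
noncomputable def RSS (x : ℕ → ℝ) (n : ℕ) (A : Finset ℕ) : ℝ :=
  ∑ t ∈ Finset.Icc 1 n, (x t - segMean x (lbd A t) (ubd A n t)) ^ 2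

/-- Schwarz criterion with penalty `ξ`. -/
noncomputable def SC (x : ℕ → ℝ) (n : ℕ) (ξ : ℝ) (A : Finset ℕ) : ℝ :=
  ((n : ℝ) / 2) * Real.log (RSS x n A / n) + (A.card : ℝ) * ξ

/-- `ε_1, …, ε_n` satisfies the uniform interval bound with level `ω`:
`|∑_{t=s+1}^e ε_t| ≤ ω √(e − s)` for all `0 ≤ s < e ≤ n`. -/
def UIB (ε : ℕ → ℝ) (n : ℕ) (ω : ℝ) : Prop :=
  ∀ s e : ℕ, s < e → e ≤ n →
    |∑ t ∈ Finset.Ioc s e, ε t| ≤ ω * Real.sqrt ((e : ℝ) - s)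

/-- CUSUM of a single-change signal: for `f_t = μ + d·𝟙{t > θ}` on `(s, e]`,
(i) the CUSUM at `θ` equals `−d √((θ−s)(e−θ)/(e−s))`;
(ii) `θ` maximises the absolute CUSUM;
(iii) `|d| √(min(θ−s, e−θ)/2) ≤ |𝒳_{s,θ,e}(f)| ≤ |d| √(min(θ−s, e−θ))`;
(iv) explicit formulas for the drop of the squared CUSUM away from `θ`. -/
lemma sumf_aux (θ : ℕ) (μ d : ℝ) (a b : ℕ) :
    ∑ t ∈ Finset.Ioc a b, (μ + (if θ < t then d else 0))
      = ((b - a : ℕ) : ℝ) * μ + ((b - max a θ : ℕ) : ℝ) * d := by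
  rw [Finset.sum_add_distrib, Finset.sum_const, Nat.card_Ioc, ← Finset.sum_filter]
  have : (Finset.Ioc a b).filter (fun t => θ < t) = Finset.Ioc (max a θ) b := by
    ext t; simp only [Finset.mem_filter, Finset.mem_Ioc, max_lt_iff]; omega
  rw [this, Finset.sum_const, Nat.card_Ioc]
  ring

lemma segdiff (s θ e : ℕ) (h1 : s < θ) (h2 : θ < e) (μ d : ℝ) (f : ℕ → ℝ)
    (hf : ∀ t ∈ Finset.Ioc s e, f t = μ + (if θ < t then d else 0))
    (c : ℕ) (hc1 : s < c) (hc2 : c < e) :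
    segMean f s c - segMean f c e
      = if θ ≤ c then -d * ((θ : ℝ) - s) / ((c : ℝ) - s)
        else -d * ((e : ℝ) - θ) / ((e : ℝ) - c) := by
  have hs1 : ∑ t ∈ Finset.Ioc s c, f t
      = ((c - s : ℕ) : ℝ) * μ + ((c - max s θ : ℕ) : ℝ) * d := by
    rw [Finset.sum_congr rfl (fun t ht => hf t (by
      simp only [Finset.mem_Ioc] at ht ⊢; omega)), sumf_aux]
  have hs2 : ∑ t ∈ Finset.Ioc c e, f t
      = ((e - c : ℕ) : ℝ) * μ + ((e - max c θ : ℕ) : ℝ) * d := by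
    rw [Finset.sum_congr rfl (fun t ht => hf t (by
      simp only [Finset.mem_Ioc] at ht ⊢; omega)), sumf_aux]
  have hcs : ((c : ℝ) - s) ≠ 0 := by
    have : (s : ℝ) < c := by exact_mod_cast hc1
    linarith
  have hec : ((e : ℝ) - c) ≠ 0 := by
    have : (c : ℝ) < e := by exact_mod_cast hc2
    linarith
  unfold segMean
  rw [hs1, hs2]
  by_cases h : θ ≤ c
  · rw [if_pos h]
    have e1 : max s θ = θ := by omega
    have e2 : max c θ = c := by omega
    rw [e1, e2, Nat.cast_sub (show s ≤ c by omega),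
      Nat.cast_sub (show θ ≤ c by omega), Nat.cast_sub (show c ≤ e by omega)]
    field_simp
    ring
  · rw [if_neg h]
    have e1 : max s θ = θ := by omega
    have e2 : max c θ = θ := by omega
    have e3 : c - θ = 0 := by omega
    rw [e1, e2, e3, Nat.cast_sub (show s ≤ c by omega),
      Nat.cast_sub (show c ≤ e by omega), Nat.cast_sub (show θ ≤ e by omega)]
    push_cast
    field_simp
    ring

theorem cusum_single_change
    (n : ℕ) (s θ e : ℕ) (h1 : s < θ) (h2 : θ < e) (h3 : e ≤ n)
    (μ d : ℝ) (f : ℕ → ℝ)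
    (hf : ∀ t ∈ Finset.Ioc s e, f t = μ + (if θ < t then d else 0)) :
    (cusum f s θ e
        = -d * Real.sqrt ((((θ : ℝ) - s) * ((e : ℝ) - θ)) / ((e : ℝ) - s)))
    ∧ (∀ c : ℕ, s < c → c < e → |cusum f s c e| ≤ |cusum f s θ e|)
    ∧ (|d| * Real.sqrt (min ((θ : ℝ) - s) ((e : ℝ) - θ) / 2) ≤ |cusum f s θ e|
        ∧ |cusum f s θ e| ≤ |d| * Real.sqrt (min ((θ : ℝ) - s) ((e : ℝ) - θ)))
    ∧ ((∀ c : ℕ, s < c → c ≤ θ →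
          (cusum f s θ e) ^ 2 - (cusum f s c e) ^ 2
            = d ^ 2 * (((θ : ℝ) - c) * ((e : ℝ) - θ)) / ((e : ℝ) - c))
        ∧ (∀ c : ℕ, θ ≤ c → c < e →
          (cusum f s θ e) ^ 2 - (cusum f s c e) ^ 2
            = d ^ 2 * (((c : ℝ) - θ) * ((θ : ℝ) - s)) / ((c : ℝ) - s))) := by
  have hθs : (0:ℝ) < (θ : ℝ) - s := by
    have : (s : ℝ) < θ := by exact_mod_cast h1
    linarith
  have heθ : (0:ℝ) < (e : ℝ) - θ := by
    have : (θ : ℝ) < e := by exact_mod_cast h2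
    linarith
  have hes : (0:ℝ) < (e : ℝ) - s := by linarith
  -- part (i)
  have hi : cusum f s θ e
      = -d * Real.sqrt ((((θ : ℝ) - s) * ((e : ℝ) - θ)) / ((e : ℝ) - s)) := by
    unfold cusum
    rw [segdiff s θ e h1 h2 μ d f hf θ h1 h2, if_pos le_rfl,
      show -d * ((θ : ℝ) - s) / ((θ : ℝ) - s) = -d by field_simp]
    ring
  -- squared value at θ
  have hsqθ : (cusum f s θ e) ^ 2
      = d ^ 2 * ((((θ : ℝ) - s) * ((e : ℝ) - θ)) / ((e : ℝ) - s)) := by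
    rw [hi, mul_pow, Real.sq_sqrt (by positivity)]
    ring
  -- squared value at general c
  have hsq : ∀ c : ℕ, s < c → c < e → (cusum f s c e) ^ 2
      = (((c : ℝ) - s) * ((e : ℝ) - c) / ((e : ℝ) - s)) *
        (if θ ≤ c then -d * ((θ : ℝ) - s) / ((c : ℝ) - s)
          else -d * ((e : ℝ) - θ) / ((e : ℝ) - c)) ^ 2 := by
    intro c hc1 hc2
    have hcs : (0:ℝ) < (c : ℝ) - s := by
      have : (s : ℝ) < c := by exact_mod_cast hc1
      linarith
    have hec : (0:ℝ) < (e : ℝ) - c := by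
      have : (c : ℝ) < e := by exact_mod_cast hc2
      linarith
    unfold cusum
    rw [segdiff s θ e h1 h2 μ d f hf c hc1 hc2, mul_pow,
      Real.sq_sqrt (by positivity)]
  -- part (iv).1
  have hiv1 : ∀ c : ℕ, s < c → c ≤ θ →
      (cusum f s θ e) ^ 2 - (cusum f s c e) ^ 2
        = d ^ 2 * (((θ : ℝ) - c) * ((e : ℝ) - θ)) / ((e : ℝ) - c) := by
    intro c hc1 hc2
    have hcs : (0:ℝ) < (c : ℝ) - s := by
      have : (s : ℝ) < c := by exact_mod_cast hc1
      linarith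
    have hcθ : (c : ℝ) ≤ θ := by exact_mod_cast hc2
    have hec : (0:ℝ) < (e : ℝ) - c := by linarith
    rcases eq_or_lt_of_le hc2 with h | h
    · subst h; rw [sub_self]; ring
    · have hcθ' : ¬ θ ≤ c := by omega
      rw [hsqθ, hsq c hc1 (by omega), if_neg hcθ']
      field_simp
      ring
  -- part (iv).2
  have hiv2 : ∀ c : ℕ, θ ≤ c → c < e →
      (cusum f s θ e) ^ 2 - (cusum f s c e) ^ 2
        = d ^ 2 * (((c : ℝ) - θ) * ((θ : ℝ) - s)) / ((c : ℝ) - s) := by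
    intro c hc1 hc2
    have hθc : (θ : ℝ) ≤ c := by exact_mod_cast hc1
    have hcs : (0:ℝ) < (c : ℝ) - s := by linarith
    have hec : (0:ℝ) < (e : ℝ) - c := by
      have : (c : ℝ) < e := by exact_mod_cast hc2
      linarith
    rw [hsqθ, hsq c (by omega) hc2, if_pos hc1]
    field_simp
    ring
  -- part (ii)
  have hii : ∀ c : ℕ, s < c → c < e → |cusum f s c e| ≤ |cusum f s θ e| := by
    intro c hc1 hc2
    rw [← Real.sqrt_sq_eq_abs, ← Real.sqrt_sq_eq_abs]
    apply Real.sqrt_le_sqrt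
    by_cases h : c ≤ θ
    · have := hiv1 c hc1 h
      have hcθ : (c : ℝ) ≤ θ := by exact_mod_cast h
      have hec : (0:ℝ) < (e : ℝ) - c := by linarith
      have hnn : 0 ≤ d ^ 2 * (((θ : ℝ) - c) * ((e : ℝ) - θ)) / ((e : ℝ) - c) :=
        div_nonneg (mul_nonneg (sq_nonneg d)
          (mul_nonneg (by linarith) (by linarith))) (by linarith)
      linarith
    · have := hiv2 c (by omega) hc2
      have hθc : (θ : ℝ) ≤ c := by exact_mod_cast (le_of_not_ge h)
      have hcs : (0:ℝ) < (c : ℝ) - s := by linarith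
      have hnn : 0 ≤ d ^ 2 * (((c : ℝ) - θ) * ((θ : ℝ) - s)) / ((c : ℝ) - s) :=
        div_nonneg (mul_nonneg (sq_nonneg d)
          (mul_nonneg (by linarith) (by linarith))) (by linarith)
      linarith
  -- part (iii)
  have habs : |cusum f s θ e|
      = |d| * Real.sqrt ((((θ : ℝ) - s) * ((e : ℝ) - θ)) / ((e : ℝ) - s)) := by
    rw [hi, abs_mul, abs_neg, abs_of_nonneg (Real.sqrt_nonneg _)]
  set a : ℝ := (θ : ℝ) - s with ha
  set b : ℝ := (e : ℝ) - θ with hb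
  have hab : (e : ℝ) - s = a + b := by rw [ha, hb]; ring
  have hX1 : min a b / 2 ≤ a * b / ((e : ℝ) - s) := by
    rw [hab]
    rcases le_total a b with h | h
    · rw [min_eq_left h, div_le_div_iff₀ (by norm_num) (by linarith)]
      nlinarith
    · rw [min_eq_right h, div_le_div_iff₀ (by norm_num) (by linarith)]
      nlinarith
  have hX2 : a * b / ((e : ℝ) - s) ≤ min a b := by
    rw [hab]
    rcases le_total a b with h | h
    · rw [min_eq_left h, div_le_iff₀ (by linarith)]
      nlinarith
    · rw [min_eq_right h, div_le_iff₀ (by linarith)]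
      nlinarith
  refine ⟨hi, hii, ⟨?_, ?_⟩, hiv1, hiv2⟩
  · rw [habs]
    exact mul_le_mul_of_nonneg_left (Real.sqrt_le_sqrt hX1) (abs_nonneg d)
  · rw [habs]
    exact mul_le_mul_of_nonneg_left (Real.sqrt_le_sqrt hX2) (abs_nonneg d)
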